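/- Let h : ℕ → K be a hypergeometric sequence with shift quotient q ∈ K(x), i.e., h(n+1) = q(n)h(n) for large n. If h agrees with a rational function sequence (i.e., h(n) = R(n) for some R ∈ K(x) and all large n), then q can be written in the form q(x) = g(x)f(x+1)/(g(x+1)f(x)) for some polynomials f, g ∈ K[x]. Consequently, every root of the numerator of q has a root of the denominator of q at integer distance. -/

import Mathlib

open Filter Polynomial

section Aux

variable {K : Type*} [Field K]

lemma aux_comp_ne_zero {p : K[X]} (hp : p ≠ 0) : p.comp (X + 1) ≠ 0 := by
  intro h
  apply hp
  have : (p.comp (X + 1)).comp (X - 1) = p := by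
    rw [comp_assoc]
    simp
  rw [h, Polynomial.zero_comp] at this
  exact this.symm

lemma aux_rm_comp (p : K[X]) (γ : K) :
    rootMultiplicity γ (p.comp (X + 1)) = rootMultiplicity (γ + 1) p := by
  rcases eq_or_ne p 0 with rfl | hp
  · simp [rootMultiplicity_zero]
  · set m := rootMultiplicity (γ + 1) p with hm
    set s := p /ₘ (X - C (γ + 1)) ^ m with hs
    have hdecomp : (X - C (γ + 1)) ^ m * s = p := pow_mul_divByMonic_rootMultiplicity_eq p (γ + 1)
    have hse : s.eval (γ + 1) ≠ 0 := eval_divByMonic_pow_rootMultiplicity_ne_zero (γ + 1) hp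
    have hXc : (X - C (γ + 1) : K[X]).comp (X + 1) = X - C γ := by
      simp [sub_comp]
    have hcomp : p.comp (X + 1) = (X - C γ) ^ m * s.comp (X + 1) := by
      rw [← hdecomp, mul_comp, pow_comp, hXc]
    have hsc : (s.comp (X + 1)).eval γ ≠ 0 := by
      rw [eval_comp]
      simpa using hse
    have hscne : s.comp (X + 1) ≠ 0 := fun h => hsc (by rw [h]; simp)
    rw [hcomp, rootMultiplicity_mul (mul_ne_zero (pow_ne_zero _ (X_sub_C_ne_zero γ)) hscne),
      rootMultiplicity_X_sub_C_pow, rootMultiplicity_eq_zero (by simpa [IsRoot] using hsc), add_zero]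

lemma aux_ev_ne [CharZero K] {D : K[X]} (hD : D ≠ 0) :
    ∀ᶠ n : ℕ in atTop, D.eval (n : K) ≠ 0 := by
  rw [← Nat.cofinite_eq_atTop]
  rw [eventually_cofinite]
  have : {n : ℕ | ¬ D.eval (n : K) ≠ 0} = (fun n : ℕ => (n : K)) ⁻¹' {x | D.IsRoot x} := by
    ext n; simp [IsRoot]
  rw [this]
  exact (finite_setOf_isRoot hD).preimage (Nat.cast_injective.injOn)

lemma aux_poly_zero [CharZero K] {P : K[X]}
    (h : ∀ᶠ n : ℕ in atTop, P.eval (n : K) = 0) : P = 0 := by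
  by_contra hP
  obtain ⟨n, h1, h2⟩ := ((aux_ev_ne hP).and h).exists
  exact h1 h2

end Aux

/-- If a hypergeometric sequence agrees with a rational-function sequence, then its shift
quotient has the Gosper form g(x)f(x+1)/(g(x+1)f(x)); consequently every root of its
numerator has a root of its denominator at integer distance. -/
theorem rational_hypergeometric_shift_quotient
    {K : Type*} [Field K] [IsAlgClosed K] [CharZero K]
    (h : ℕ → K) (q : RatFunc K) (hq : q ≠ 0)
    (hrec : ∀ᶠ n : ℕ in atTop, h (n + 1) = q.eval (RingHom.id K) (n : K) * h n)
    (hnz : ∀ᶠ n : ℕ in atTop, h n ≠ 0)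
    (R : RatFunc K) (hR : ∀ᶠ n : ℕ in atTop, h n = R.eval (RingHom.id K) (n : K)) :
    (∃ f g : Polynomial K, f ≠ 0 ∧ g ≠ 0 ∧
        q = RatFunc.mk (g * f.comp (Polynomial.X + 1)) (g.comp (Polynomial.X + 1) * f)) ∧
    (∀ α : K, q.num.eval α = 0 →
        ∃ β : K, q.denom.eval β = 0 ∧ ∃ z : ℤ, α - β = (z : K)) := by
  classical
  have hR0 : R ≠ 0 := by
    rintro rfl
    obtain ⟨n, h1, h2⟩ := (hnz.and hR).exists
    rw [RatFunc.eval_zero] at h2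
    exact h1 h2
  set N := q.num with hNdef
  set D := q.denom with hDdef
  set f := R.num with hfdef
  set g := R.denom with hgdef
  have hNne : N ≠ 0 := RatFunc.num_ne_zero hq
  have hDne : D ≠ 0 := q.denom_ne_zero
  have hfne : f ≠ 0 := RatFunc.num_ne_zero hR0
  have hgne : g ≠ 0 := R.denom_ne_zero
  have hqev : ∀ x : K, q.eval (RingHom.id K) x = N.eval x / D.eval x := fun x => rfl
  have hRev : ∀ x : K, R.eval (RingHom.id K) x = f.eval x / g.eval x := fun x => rfl
  -- the key polynomial identity
  have hEv : ∀ᶠ n : ℕ in atTop,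
      (f.comp (X + 1) * D * g - N * (f * g.comp (X + 1))).eval (n : K) = 0 := by
    have H := hrec.and ((aux_ev_ne hDne).and ((aux_ev_ne hgne).and hR))
    obtain ⟨A, hA⟩ := eventually_atTop.1 H
    rw [eventually_atTop]
    refine ⟨A, fun n hn => ?_⟩
    obtain ⟨e_rec, e_D, e_g, e_R⟩ := hA n hn
    obtain ⟨-, -, e_g1, e_R1⟩ := hA (n + 1) (le_trans hn (Nat.le_succ n))
    push_cast at e_g1 e_R1
    have eq := e_rec
    rw [e_R1, e_R, hqev, hRev, hRev] at eq
    field_simp at eq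
    simp only [eval_sub, eval_mul, eval_comp, eval_add, eval_X, eval_one]
    linear_combination eq
  have key : f.comp (X + 1) * D * g = N * (f * g.comp (X + 1)) :=
    sub_eq_zero.mp (aux_poly_zero hEv)
  constructor
  · refine ⟨f, g, hfne, hgne, ?_⟩
    rw [RatFunc.mk_eq_div, eq_div_iff
      (RatFunc.algebraMap_ne_zero (mul_ne_zero (aux_comp_ne_zero hgne) hfne))]
    conv_lhs => rw [← RatFunc.num_div_denom q]
    rw [div_mul_eq_mul_div, div_eq_iff (RatFunc.algebraMap_ne_zero hDne), ← map_mul, ← map_mul]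
    congr 1
    linear_combination -key
  · intro α hα
    by_contra hcon
    push_neg at hcon
    have hDz : ∀ z : ℤ, D.eval (α + z) ≠ 0 := by
      intro z hz
      exact hcon _ hz (-z) (by push_cast; ring)
    have hrm : ∀ γ : K,
        (rootMultiplicity γ (f.comp (X + 1)) : ℤ) + rootMultiplicity γ D + rootMultiplicity γ g
          = rootMultiplicity γ N + rootMultiplicity γ f
            + rootMultiplicity γ (g.comp (X + 1)) := by
      intro γ
      have h1 : rootMultiplicity γ (f.comp (X + 1) * D * g)
          = rootMultiplicity γ (N * (f * g.comp (X + 1))) := by rw [key]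
      rw [rootMultiplicity_mul (mul_ne_zero (mul_ne_zero (aux_comp_ne_zero hfne) hDne) hgne),
        rootMultiplicity_mul (mul_ne_zero (aux_comp_ne_zero hfne) hDne),
        rootMultiplicity_mul (mul_ne_zero hNne (mul_ne_zero hfne (aux_comp_ne_zero hgne))),
        rootMultiplicity_mul (mul_ne_zero hfne (aux_comp_ne_zero hgne))] at h1
      omega
    set u : ℤ → ℤ :=
      fun z => (rootMultiplicity (α + z) f : ℤ) - rootMultiplicity (α + z) g with hu
    have hstep : ∀ z : ℤ, u (z + 1) = u z + rootMultiplicity (α + z) N := by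
      intro z
      have h2 := hrm (α + z)
      rw [aux_rm_comp, aux_rm_comp] at h2
      have hD0 : rootMultiplicity (α + z) D = 0 := rootMultiplicity_eq_zero (hDz z)
      have hcast : (α + ((z + 1 : ℤ) : K)) = (α + z) + 1 := by push_cast; ring
      simp only [hu, hcast]
      omega
    have hmono : ∀ z w : ℤ, z ≤ w → u z ≤ u w := by
      intro z w
      refine Int.le_induction (motive := fun w _ => u z ≤ u w) (le_refl _) (fun n _ ih => ?_) w
      rw [hstep n]; omega
    have hjump : u 0 + 1 ≤ u 1 := by
      have h0 := hstep 0
      have hpos : 0 < rootMultiplicity α N := (rootMultiplicity_pos hNne).mpr hα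
      norm_num at h0
      omega
    have hT : Set.Finite {z : ℤ | (f * g).IsRoot (α + z)} := by
      refine (finite_setOf_isRoot (mul_ne_zero hfne hgne)).preimage
        (Function.Injective.injOn ?_)
      intro a b hab
      exact_mod_cast add_left_cancel hab
    have huz : ∀ z : ℤ, z ∉ {z : ℤ | (f * g).IsRoot (α + z)} → u z = 0 := by
      intro z hz
      simp only [Set.mem_setOf_eq, IsRoot, eval_mul, mul_eq_zero, not_or] at hz
      simp only [hu]
      rw [rootMultiplicity_eq_zero hz.1, rootMultiplicity_eq_zero hz.2]
      simp
    obtain ⟨b, hb⟩ := hT.bddAbove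
    obtain ⟨a, ha⟩ := hT.bddBelow
    have hB : u (max b 0 + 1) = 0 := huz _ (fun hmem => by have := hb hmem; omega)
    have hA : u (min a 0 - 1) = 0 := huz _ (fun hmem => by have := ha hmem; omega)
    have m1 := hmono (min a 0 - 1) 0 (by omega)
    have m2 := hmono 1 (max b 0 + 1) (by omega)
    omega
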